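/- Let ⟨f_α : α < η⟩ be a <*-increasing sequence in ∏_n τ_n which is <*-cofinal in ∏_n δ_n, where δ_n = sup(N ∩ τ_n) for an internally approachable structure N, and suppose f_δ (for δ = sup(N ∩ η)) is an exact upper bound of ⟨f_α : α < δ⟩ with the sequence ⟨f_α : α < δ⟩ cofinally interleaved with ∏_n δ_n. Then f_δ(n) = δ_n for all but finitely many n. -/

import Mathlib

/-- `f <* g` : eventual (mod finite) domination. -/
def evDom (f g : ℕ → Ordinal) : Prop := ∀ᶠ n in Filter.atTop, f n < g n

/-- if f_δ is an exact upper bound of the sequence below δ and the sequence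
is cofinally interleaved with ∏ₙ δₙ, then f_δ(n) = δₙ for all but finitely many n. -/
theorem eub_agrees_with_char
    (τ : ℕ → Ordinal) (η δ : Ordinal) (f : Ordinal → ℕ → Ordinal) (δn : ℕ → Ordinal)
    (hδη : δ < η) (hδcof : Cardinal.aleph0 < δ.cof)
    (hinc : ∀ α β, α < β → β < η → evDom (f α) (f β))
    (hδn : ∀ n, δn n ≤ τ n)
    (hinter₁ : ∀ α < δ, ∃ g : ℕ → Ordinal, (∀ n, g n < δn n) ∧ evDom (f α) g)
    (hinter₂ : ∀ g : ℕ → Ordinal, (∀ n, g n < δn n) → ∃ α < δ, evDom g (f α))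
    (heub₁ : ∀ α < δ, evDom (f α) (f δ))
    (heub₂ : ∀ g : ℕ → Ordinal, evDom g (f δ) → ∃ α < δ, evDom g (f α)) :
    ∀ᶠ n in Filter.atTop, f δ n = δn n := by
  have hδ0 : 0 < δ := by
    rcases eq_zero_or_pos δ with h | h
    · subst h; simp [Ordinal.cof_zero] at hδcof
    · exact h
  have hδpos : ∀ n, 0 < δn n := by
    obtain ⟨g, hg, -⟩ := hinter₁ 0 hδ0
    exact fun n => lt_of_le_of_lt (zero_le (a := g n)) (hg n)
  -- Step 1: eventually δn n ≤ f δ n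
  have h1 : ∀ᶠ n in Filter.atTop, δn n ≤ f δ n := by
    by_contra h
    rw [Filter.not_eventually] at h
    simp only [not_le] at h
    set g : ℕ → Ordinal := fun n => if f δ n < δn n then f δ n else 0 with hgdef
    have hg : ∀ n, g n < δn n := by
      intro n
      by_cases hc : f δ n < δn n <;> simp [hgdef, hc, hδpos n]
    obtain ⟨α, hα, hgα⟩ := hinter₂ g hg
    have hfα := heub₁ α hα
    obtain ⟨n, hn1, hn2, hn3⟩ := (h.and_eventually (hgα.and hfα)).exists
    have hgn : g n = f δ n := if_pos hn1
    rw [hgn] at hn2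
    exact absurd (hn2.trans hn3) (lt_irrefl _)
  -- Step 2: eventually f δ n ≤ δn n
  have h2 : ∀ᶠ n in Filter.atTop, f δ n ≤ δn n := by
    by_contra h
    rw [Filter.not_eventually] at h
    simp only [not_le] at h
    set g : ℕ → Ordinal := fun n => if δn n < f δ n then δn n else 0 with hgdef
    have hg : evDom g (f δ) := by
      filter_upwards [h1] with n hn
      by_cases hc : δn n < f δ n
      · simp [hgdef, hc]
      · simpa [hgdef, hc] using lt_of_lt_of_le (hδpos n) hn
    obtain ⟨α, hα, hgα⟩ := heub₂ g hg
    obtain ⟨g', hg', hαg'⟩ := hinter₁ α hα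
    obtain ⟨n, hn1, hn2, hn3⟩ := (h.and_eventually (hgα.and hαg')).exists
    have hgn : g n = δn n := if_pos hn1
    rw [hgn] at hn2
    exact absurd ((hn2.trans hn3).trans (hg' n)) (lt_irrefl _)
  filter_upwards [h1, h2] with n hn1 hn2
  exact le_antisymm hn2 hn1
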